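/- arXiv:2007.01953 — 4 statements merged into one kernel-verified Lean document; each statement's English description precedes it below -/
import Mathlib

section
/- Along any solution of the single-host Holt–Lawton model with x_1(0) > 0, the inequality ln x_1(t+1) ≤ ln(R_max·x_1(0)) + Σ_{s=1}^{t} (ln R_1(s) - a_1(s)·I(s-1)) holds for all t ≥ 1. -/
/-- Along any solution of the single-host Holt–Lawton model with `x 0 > 0`,
`ln x (t+1) ≤ ln (Rmax * x 0) + ∑_{s=1}^{t} (ln (R s) - a s * I (s-1))` for all `t ≥ 1`. -/
theorem log_host_pathwise_bound
    (x y : ℕ → ℝ) (R a I : ℕ → ℝ)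
    (Rmin Rmax amin amax Imin Imax : ℝ)
    (hRmin : 0 < Rmin) (hamin : 0 < amin) (hImin : 0 < Imin)
    (hR : ∀ t, R t ∈ Set.Icc Rmin Rmax)
    (ha : ∀ t, a t ∈ Set.Icc amin amax)
    (hI : ∀ t, I t ∈ Set.Icc Imin Imax)
    (hx0 : 0 < x 0) (hy0 : 0 ≤ y 0)
    (hx : ∀ t, x (t + 1) = R t * x t * Real.exp (-(a t) * y t))
    (hy : ∀ t, y (t + 1) = x t * (1 - Real.exp (-(a t) * y t)) + I t) :
    ∀ t, 1 ≤ t →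
      Real.log (x (t + 1)) ≤
        Real.log (Rmax * x 0) +
          ∑ s ∈ Finset.Icc 1 t, (Real.log (R s) - a s * I (s - 1)) := by
  have hxpos : ∀ t, 0 < x t := by
    intro t
    induction t with
    | zero => exact hx0
    | succ n ih =>
      rw [hx n]
      have hRn : 0 < R n := hRmin.trans_le (hR n).1
      positivity
  have hynn : ∀ t, 0 ≤ y t := by
    intro t
    induction t with
    | zero => exact hy0
    | succ n ihn =>
      rw [hy n]
      have h1 : Real.exp (-(a n) * y n) ≤ 1 := by
        rw [← Real.exp_zero]
        apply Real.exp_le_exp.mpr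
        have := (ha n).1
        nlinarith
      have := hImin.le.trans (hI n).1
      nlinarith [(hxpos n).le]
  have hyI : ∀ t, 1 ≤ t → I (t - 1) ≤ y t := by
    intro t ht
    obtain ⟨s, rfl⟩ := Nat.exists_eq_add_of_le ht
    simp only [Nat.add_sub_cancel_left]
    rw [add_comm 1 s, hy s]
    have h1 : Real.exp (-(a s) * y s) ≤ 1 := by
      rw [← Real.exp_zero]
      apply Real.exp_le_exp.mpr
      have := (ha s).1
      nlinarith [hynn s]
    have hxp := (hxpos s).le
    nlinarith
  have hlog : ∀ t, Real.log (x (t + 1)) =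
      Real.log (R t) + Real.log (x t) + (-(a t) * y t) := by
    intro t
    have hRt : 0 < R t := hRmin.trans_le (hR t).1
    have hxt : 0 < x t := hxpos t
    rw [hx t, Real.log_mul (by positivity) (Real.exp_ne_zero _),
      Real.log_mul (ne_of_gt (hRmin.trans_le (hR t).1)) (ne_of_gt (hxpos t)),
      Real.log_exp]
  have key : ∀ t, 1 ≤ t →
      Real.log (x (t + 1)) ≤ Real.log (x t) + (Real.log (R t) - a t * I (t - 1)) := by
    intro t ht
    rw [hlog t]
    have h1 := hyI t ht
    have h2 := (ha t).1
    nlinarith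
  intro t ht
  induction t with
  | zero => omega
  | succ n ih =>
    rcases Nat.eq_or_lt_of_le ht with h | h
    · -- t = 1
      have hn : n = 0 := by omega
      subst hn
      rw [Finset.Icc_self, Finset.sum_singleton]
      have hk := key 1 le_rfl
      have hb : Real.log (x 1) ≤ Real.log (Rmax * x 0) := by
        rw [hlog 0, Real.log_mul (ne_of_gt (hRmin.trans_le ((hR 0).1.trans (hR 0).2))) (ne_of_gt hx0)]
        have h1 : Real.log (R 0) ≤ Real.log Rmax :=
          Real.log_le_log (hRmin.trans_le (hR 0).1) (hR 0).2
        have h2 := (ha 0).1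
        nlinarith
      linarith
    · have hn : 1 ≤ n := by omega
      have ihn := ih hn
      have hk := key (n + 1) (by omega)
      rw [Finset.sum_Icc_succ_top (by omega : 1 ≤ n + 1)]
      have hb : Real.log (x (n + 1)) ≤
          Real.log (Rmax * x 0) + ∑ s ∈ Finset.Icc 1 n, (Real.log (R s) - a s * I (s - 1)) := ihn
      linarith
end

section
/- In the single-host stochastic Holt–Lawton model where (R_1(t), a_1(t), I(t)) for t = 0,1,2,… are i.i.d. with R_1(t) ∈ [R_min, R_max], a_1(t) ∈ [a_min, a_max], I(t) ∈ [I_min, I_max] (all lower bounds positive), if E[ln R_1(0)] < E[a_1(0)]·E[I(0)] and a_1(t) is independent of I(t-1), then for any initial condition with x_1(0) > 0 and y(0) ≥ 0, almost surely limsup_{t→∞} (1/t)·ln x_1(t) ≤ E[ln R_1(0)] - E[a_1(0)]·E[I(0)] < 0; in particular x_1(t) → 0 almost surely. -/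
open MeasureTheory ProbabilityTheory Filter

private lemma shl_combine (W : ℕ → ℝ) (m : ℝ)
    (hU : Tendsto (fun n : ℕ => (∑ i ∈ Finset.range n, W (2 * i)) / n) atTop (nhds m))
    (hV : Tendsto (fun n : ℕ => (∑ i ∈ Finset.range n, W (2 * i + 1)) / n) atTop (nhds m)) :
    Tendsto (fun n : ℕ => (∑ k ∈ Finset.range n, W k) / n) atTop (nhds m) := by
  have hsplit : ∀ n, (∑ k ∈ Finset.range (2 * n), W k)
      = (∑ i ∈ Finset.range n, W (2 * i)) + ∑ i ∈ Finset.range n, W (2 * i + 1) := by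
    intro n
    induction n with
    | zero => simp
    | succ n ih =>
      have h2 : 2 * (n + 1) = (2 * n) + 1 + 1 := by ring
      rw [h2, Finset.sum_range_succ, Finset.sum_range_succ, ih,
        Finset.sum_range_succ, Finset.sum_range_succ]
      ring
  rw [Metric.tendsto_atTop] at hU hV ⊢
  intro ε hε
  obtain ⟨N1, h1⟩ := hU (ε / 2) (by linarith)
  obtain ⟨N2, h2⟩ := hV (ε / 2) (by linarith)
  set N := max N1 N2 + 1 with hN
  have keyU : ∀ n, N ≤ n → |(∑ i ∈ Finset.range n, W (2 * i)) - n * m| ≤ ε / 2 * n := by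
    intro n hn
    have hn0 : 0 < (n : ℝ) := by
      have : 1 ≤ n := le_trans (by omega) hn
      exact_mod_cast Nat.lt_of_lt_of_le Nat.zero_lt_one this
    have hd := h1 n (le_trans (by omega) hn)
    rw [Real.dist_eq] at hd
    have heq : (∑ i ∈ Finset.range n, W (2 * i)) - n * m
        = n * ((∑ i ∈ Finset.range n, W (2 * i)) / n - m) := by field_simp
    rw [heq, abs_mul, abs_of_pos hn0]
    nlinarith [abs_nonneg ((∑ i ∈ Finset.range n, W (2 * i)) / n - m)]
  have keyV : ∀ n, N ≤ n → |(∑ i ∈ Finset.range n, W (2 * i + 1)) - n * m| ≤ ε / 2 * n := by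
    intro n hn
    have hn0 : 0 < (n : ℝ) := by
      have : 1 ≤ n := le_trans (by omega) hn
      exact_mod_cast Nat.lt_of_lt_of_le Nat.zero_lt_one this
    have hd := h2 n (le_trans (by omega) hn)
    rw [Real.dist_eq] at hd
    have heq : (∑ i ∈ Finset.range n, W (2 * i + 1)) - n * m
        = n * ((∑ i ∈ Finset.range n, W (2 * i + 1)) / n - m) := by field_simp
    rw [heq, abs_mul, abs_of_pos hn0]
    nlinarith [abs_nonneg ((∑ i ∈ Finset.range n, W (2 * i + 1)) / n - m)]
  refine ⟨2 * N + 2, fun t ht => ?_⟩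
  have ht0 : 0 < (t : ℝ) := by exact_mod_cast Nat.lt_of_lt_of_le (by omega) ht
  have habs : |(∑ k ∈ Finset.range t, W k) - t * m| ≤ ε / 2 * t := by
    rcases Nat.even_or_odd t with ⟨s, hs⟩ | ⟨s, hs⟩
    · have hts : t = 2 * s := by omega
      have hsN : N ≤ s := by omega
      have hc : (t : ℝ) = 2 * s := by exact_mod_cast congrArg Nat.cast hts
      rw [hts, hsplit s]
      have := keyU s hsN
      have := keyV s hsN
      calc |((∑ i ∈ Finset.range s, W (2 * i)) + ∑ i ∈ Finset.range s, W (2 * i + 1))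
            - (2 * s : ℕ) * m|
          = |((∑ i ∈ Finset.range s, W (2 * i)) - s * m)
            + ((∑ i ∈ Finset.range s, W (2 * i + 1)) - s * m)| := by
            congr 1; push_cast; ring
        _ ≤ |(∑ i ∈ Finset.range s, W (2 * i)) - s * m|
            + |(∑ i ∈ Finset.range s, W (2 * i + 1)) - s * m| := abs_add_le _ _
        _ ≤ ε / 2 * s + ε / 2 * s := by gcongr <;> assumption
        _ = ε / 2 * (2 * s : ℕ) := by push_cast; ring
    · have hts : t = 2 * s + 1 := hs
      have hsN : N ≤ s := by omega
      have hsum : (∑ k ∈ Finset.range t, W k)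
          = (∑ i ∈ Finset.range (s + 1), W (2 * i)) + ∑ i ∈ Finset.range s, W (2 * i + 1) := by
        rw [hts, Finset.sum_range_succ, hsplit s, Finset.sum_range_succ]
        ring
      rw [hsum]
      have hU' := keyU (s + 1) (by omega)
      have hV' := keyV s hsN
      calc |((∑ i ∈ Finset.range (s + 1), W (2 * i)) + ∑ i ∈ Finset.range s, W (2 * i + 1))
            - t * m|
          = |((∑ i ∈ Finset.range (s + 1), W (2 * i)) - (s + 1 : ℕ) * m)
            + ((∑ i ∈ Finset.range s, W (2 * i + 1)) - s * m)| := by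
            congr 1; rw [hts]; push_cast; ring
        _ ≤ |(∑ i ∈ Finset.range (s + 1), W (2 * i)) - (s + 1 : ℕ) * m|
            + |(∑ i ∈ Finset.range s, W (2 * i + 1)) - s * m| := abs_add_le _ _
        _ ≤ ε / 2 * (s + 1 : ℕ) + ε / 2 * s := by gcongr
        _ = ε / 2 * t := by rw [hts]; push_cast; ring
  rw [Real.dist_eq]
  have heq : (∑ k ∈ Finset.range t, W k) / t - m
      = ((∑ k ∈ Finset.range t, W k) - t * m) / t := by field_simp
  rw [heq, abs_div, abs_of_pos ht0]
  calc |(∑ k ∈ Finset.range t, W k) - t * m| / t ≤ (ε / 2 * t) / t := by gcongr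
    _ = ε / 2 := by field_simp
    _ < ε := by linarith

set_option maxHeartbeats 2000000 in
/-- Extinction part of Theorem 1: in the single-host stochastic Holt–Lawton model
with i.i.d. bounded coefficients, if `E[ln R 0] < E[a 0] * E[I 0]` and `a t` is
independent of `I (t-1)`, then for any initial condition with `x 0 > 0`, `y 0 ≥ 0`,
almost surely `limsup (1/t) ln x t ≤ E[ln R 0] - E[a 0]·E[I 0] < 0` and `x t → 0`. -/
theorem single_host_extinction
    {Ω : Type*} [MeasurableSpace Ω] (P : Measure Ω) [IsProbabilityMeasure P]
    (R a I : ℕ → Ω → ℝ)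
    (hmeasR : ∀ t, Measurable (R t)) (hmeasa : ∀ t, Measurable (a t))
    (hmeasI : ∀ t, Measurable (I t))
    (Rmin Rmax amin amax Imin Imax : ℝ)
    (hRmin : 0 < Rmin) (hamin : 0 < amin) (hImin : 0 < Imin)
    (hR : ∀ t ω, R t ω ∈ Set.Icc Rmin Rmax)
    (ha : ∀ t ω, a t ω ∈ Set.Icc amin amax)
    (hI : ∀ t ω, I t ω ∈ Set.Icc Imin Imax)
    (hindep : iIndepFun
      (fun t ω => (R t ω, a t ω, I t ω)) P)
    (hident : ∀ t, IdentDistrib (fun ω => (R t ω, a t ω, I t ω))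
      (fun ω => (R 0 ω, a 0 ω, I 0 ω)) P P)
    (haIindep : ∀ t, 1 ≤ t → IndepFun (a t) (I (t - 1)) P)
    (hmean : ∫ ω, Real.log (R 0 ω) ∂P < (∫ ω, a 0 ω ∂P) * ∫ ω, I 0 ω ∂P)
    (x y : ℕ → Ω → ℝ)
    (hx0 : ∀ ω, 0 < x 0 ω) (hy0 : ∀ ω, 0 ≤ y 0 ω)
    (hx : ∀ t ω, x (t + 1) ω = R t ω * x t ω * Real.exp (-(a t ω) * y t ω))
    (hy : ∀ t ω, y (t + 1) ω =
      x t ω * (1 - Real.exp (-(a t ω) * y t ω)) + I t ω) :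
    ∀ᵐ ω ∂P,
      (limsup (fun t : ℕ => Real.log (x t ω) / t) atTop ≤
        (∫ ω', Real.log (R 0 ω') ∂P) - (∫ ω', a 0 ω' ∂P) * ∫ ω', I 0 ω' ∂P) ∧
      ((∫ ω', Real.log (R 0 ω') ∂P) - (∫ ω', a 0 ω' ∂P) * ∫ ω', I 0 ω' ∂P < 0) ∧
      Tendsto (fun t => x t ω) atTop (nhds 0) := by
  have hSLLN : ∀ᵐ ω ∂P, Tendsto
      (fun n : ℕ => (∑ k ∈ Finset.range n, (Real.log (R (k+1) ω) - a (k+1) ω * I k ω)) / n)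
      atTop (nhds ((∫ ω', Real.log (R 0 ω') ∂P) - (∫ ω', a 0 ω' ∂P) * ∫ ω', I 0 ω' ∂P)) := by
    set m : ℝ := (∫ ω', Real.log (R 0 ω') ∂P) - (∫ ω', a 0 ω' ∂P) * ∫ ω', I 0 ω' ∂P with hm
    set v : ℕ → Ω → ℝ × ℝ × ℝ := fun t ω => (R t ω, a t ω, I t ω) with hv
    have hmeasv : ∀ t, Measurable (v t) :=
      fun t => (hmeasR t).prodMk ((hmeasa t).prodMk (hmeasI t))
    set g : (ℝ × ℝ × ℝ) × (ℝ × ℝ × ℝ) → ℝ := fun p => Real.log p.1.1 - p.1.2.1 * p.2.2.2 with hgdef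
    have hgmeas : Measurable g :=
      (Real.measurable_log.comp (measurable_fst.fst)).sub
        ((measurable_fst.snd.fst).mul (measurable_snd.snd.snd))
    set W : ℕ → Ω → ℝ := fun k ω => g (v (k + 1) ω, v k ω) with hW
    have hWeq : ∀ k ω, W k ω = Real.log (R (k+1) ω) - a (k+1) ω * I k ω := fun k ω => rfl
    have hpm : ∀ i j : ℕ, Measurable (fun ω => (v i ω, v j ω)) :=
      fun i j => (hmeasv i).prodMk (hmeasv j)
    have hWmeas : ∀ k, Measurable (W k) := fun k => hgmeas.comp (hpm (k+1) k)
    -- identical distribution of pairs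
    have hpairdist : ∀ i j : ℕ, i ≠ j →
        IdentDistrib (fun ω => (v i ω, v j ω)) (fun ω => (v 1 ω, v 0 ω)) P P := by
      intro i j hij
      refine ⟨(hpm i j).aemeasurable, (hpm 1 0).aemeasurable, ?_⟩
      have e1 := (indepFun_iff_map_prod_eq_prod_map_map (hmeasv i).aemeasurable
          (hmeasv j).aemeasurable).mp (hindep.indepFun hij)
      have e2 := (indepFun_iff_map_prod_eq_prod_map_map (hmeasv 1).aemeasurable
          (hmeasv 0).aemeasurable).mp (hindep.indepFun one_ne_zero)
      have hi : Measure.map (v i) P = Measure.map (v 1) P :=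
        ((hident i).trans (hident 1).symm).map_eq
      have hj : Measure.map (v j) P = Measure.map (v 0) P :=
        ((hident j).trans (hident 0).symm).map_eq
      rw [e1, e2, hi, hj]
    have hWid : ∀ k, IdentDistrib (W k) (W 0) P P := by
      intro k
      have := (hpairdist (k+1) k (by omega)).comp hgmeas
      exact this
    -- integrability
    have hCbd : ∀ k ω, |W k ω| ≤ |Real.log Rmin| + |Real.log Rmax| + amax * Imax := by
      intro k ω
      rw [hWeq]
      have h1 := (hR (k+1) ω).1
      have h2 := (hR (k+1) ω).2
      have hlog1 : Real.log Rmin ≤ Real.log (R (k+1) ω) := Real.log_le_log hRmin h1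
      have hlog2 : Real.log (R (k+1) ω) ≤ Real.log Rmax :=
        Real.log_le_log (lt_of_lt_of_le hRmin h1) h2
      have ha1 := (ha (k+1) ω).1
      have ha2 := (ha (k+1) ω).2
      have hI1 := (hI k ω).1
      have hI2 := (hI k ω).2
      have hprod : 0 ≤ a (k+1) ω * I k ω :=
        mul_nonneg (le_trans hamin.le ha1) (le_trans hImin.le hI1)
      have hprod2 : a (k+1) ω * I k ω ≤ amax * Imax :=
        mul_le_mul ha2 hI2 (le_trans hImin.le hI1) (le_trans (le_trans hamin.le ha1) ha2)
      rw [abs_sub_comm, abs_sub_le_iff]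
      constructor
      · have : -(|Real.log Rmin|) ≤ Real.log (R (k+1) ω) := le_trans (neg_abs_le _) hlog1
        nlinarith [abs_nonneg (Real.log Rmin), abs_nonneg (Real.log Rmax)]
      · have : Real.log (R (k+1) ω) ≤ |Real.log Rmax| := le_trans hlog2 (le_abs_self _)
        nlinarith [abs_nonneg (Real.log Rmin), abs_nonneg (Real.log Rmax)]
    have hWint : ∀ k, Integrable (W k) P := by
      intro k
      refine (integrable_const (|Real.log Rmin| + |Real.log Rmax| + amax * Imax)).mono'
        (hWmeas k).aestronglyMeasurable (ae_of_all _ fun ω => ?_)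
      rw [Real.norm_eq_abs]; exact hCbd k ω
    -- mean
    have hEW : ∫ ω, W 0 ω ∂P = m := by
      have hintlog : Integrable (fun ω => Real.log (R 1 ω)) P := by
        refine (integrable_const (|Real.log Rmin| + |Real.log Rmax|)).mono'
          (Real.measurable_log.comp (hmeasR 1)).aestronglyMeasurable (ae_of_all _ fun ω => ?_)
        have h1 := (hR 1 ω).1
        have hlog1 : Real.log Rmin ≤ Real.log (R 1 ω) := Real.log_le_log hRmin h1
        have hlog2 : Real.log (R 1 ω) ≤ Real.log Rmax :=
          Real.log_le_log (lt_of_lt_of_le hRmin h1) (hR 1 ω).2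
        rw [Real.norm_eq_abs, abs_le]
        constructor
        · nlinarith [neg_abs_le (Real.log Rmin), abs_nonneg (Real.log Rmax)]
        · nlinarith [le_abs_self (Real.log Rmax), abs_nonneg (Real.log Rmin)]
      have hintprod : Integrable (fun ω => a 1 ω * I 0 ω) P := by
        refine (integrable_const (amax * Imax)).mono'
          ((hmeasa 1).mul (hmeasI 0)).aestronglyMeasurable (ae_of_all _ fun ω => ?_)
        rw [Real.norm_eq_abs, abs_of_nonneg (mul_nonneg (le_trans hamin.le (ha 1 ω).1)
          (le_trans hImin.le (hI 0 ω).1))]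
        exact mul_le_mul (ha 1 ω).2 (hI 0 ω).2 (le_trans hImin.le (hI 0 ω).1)
          (le_trans (le_trans hamin.le (ha 1 ω).1) (ha 1 ω).2)
      have h1 : ∫ ω, W 0 ω ∂P
          = (∫ ω, Real.log (R 1 ω) ∂P) - ∫ ω, a 1 ω * I 0 ω ∂P := by
        simp_rw [hWeq]
        exact integral_sub hintlog hintprod
      have h2 : ∫ ω, Real.log (R 1 ω) ∂P = ∫ ω', Real.log (R 0 ω') ∂P :=
        ((hident 1).comp (Real.measurable_log.comp measurable_fst)).integral_eq
      have h3 : ∫ ω, a 1 ω * I 0 ω ∂P = (∫ ω, a 1 ω ∂P) * ∫ ω, I 0 ω ∂P :=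
        (haIindep 1 le_rfl).integral_mul_eq_mul_integral (hmeasa 1).aestronglyMeasurable
          (hmeasI 0).aestronglyMeasurable
      have h4 : ∫ ω, a 1 ω ∂P = ∫ ω', a 0 ω' ∂P :=
        ((hident 1).comp (measurable_fst.comp measurable_snd)).integral_eq
      rw [h1, h2, h3, h4, hm]
    -- SLLN for even and odd subsequences
    have hdistinct : ∀ i j : ℕ, i ≠ j → ∀ c : ℕ, IndepFun (W (2 * i + c)) (W (2 * j + c)) P := by
      intro i j hij c
      have := hindep.indepFun_prodMk_prodMk hmeasv (2*i+c+1) (2*i+c) (2*j+c+1) (2*j+c)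
        (by omega) (by omega) (by omega) (by omega)
      exact this.comp hgmeas hgmeas
    have hU : ∀ᵐ ω ∂P, Tendsto
        (fun n : ℕ => (n : ℝ)⁻¹ • ∑ i ∈ Finset.range n, W (2 * i) ω) atTop (nhds m) := by
      have := strong_law_ae (μ := P) (fun i => W (2 * i)) (hWint 0)
        (fun i j hij => hdistinct i j hij 0)
        (fun i => hWid (2 * i))
      have hint : P[W (2 * 0)] = m := hEW
      rw [hint] at this
      exact this
    have hV : ∀ᵐ ω ∂P, Tendsto
        (fun n : ℕ => (n : ℝ)⁻¹ • ∑ i ∈ Finset.range n, W (2 * i + 1) ω) atTop (nhds m) := by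
      have hEW1 : P[fun ω => W (2 * 0 + 1) ω] = m := by
        rw [show (2*0+1 : ℕ) = 1 from rfl]
        rw [show P[W 1] = ∫ ω, W 1 ω ∂P from rfl, (hWid 1).integral_eq, hEW]
      have := strong_law_ae (μ := P) (fun i => W (2 * i + 1)) ((hWint 1))
        (fun i j hij => hdistinct i j hij 1)
        (fun i => (hWid (2 * i + 1)).trans (hWid 1).symm)
      rw [hEW1] at this
      exact this
    filter_upwards [hU, hV] with ω hUω hVω
    have h1 : Tendsto (fun n : ℕ => (∑ i ∈ Finset.range n, W (2 * i) ω) / n) atTop (nhds m) := by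
      simpa [div_eq_inv_mul] using hUω
    have h2 : Tendsto (fun n : ℕ => (∑ i ∈ Finset.range n, W (2 * i + 1) ω) / n) atTop (nhds m) := by
      simpa [div_eq_inv_mul] using hVω
    have := shl_combine (fun k => W k ω) m h1 h2
    simpa [hWeq] using this

  set m : ℝ := (∫ ω', Real.log (R 0 ω') ∂P) - (∫ ω', a 0 ω' ∂P) * ∫ ω', I 0 ω' ∂P with hm
  have hmneg : m < 0 := by rw [hm]; linarith
  set C : ℝ := |Real.log Rmin| + |Real.log Rmax| + amax * Imax with hC
  have hCbd : ∀ (k : ℕ) (ω : Ω), |Real.log (R (k+1) ω) - a (k+1) ω * I k ω| ≤ C := by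
    intro k ω
    have h1 := (hR (k+1) ω).1
    have h2 := (hR (k+1) ω).2
    have hlog1 : Real.log Rmin ≤ Real.log (R (k+1) ω) := Real.log_le_log hRmin h1
    have hlog2 : Real.log (R (k+1) ω) ≤ Real.log Rmax :=
      Real.log_le_log (lt_of_lt_of_le hRmin h1) h2
    have ha1 := (ha (k+1) ω).1
    have ha2 := (ha (k+1) ω).2
    have hI1 := (hI k ω).1
    have hI2 := (hI k ω).2
    have hprod : 0 ≤ a (k+1) ω * I k ω :=
      mul_nonneg (le_trans hamin.le ha1) (le_trans hImin.le hI1)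
    have hprod2 : a (k+1) ω * I k ω ≤ amax * Imax :=
      mul_le_mul ha2 hI2 (le_trans hImin.le hI1) (le_trans (le_trans hamin.le ha1) ha2)
    rw [hC, abs_sub_comm, abs_sub_le_iff]
    constructor
    · have : -(|Real.log Rmin|) ≤ Real.log (R (k+1) ω) := le_trans (neg_abs_le _) hlog1
      nlinarith [abs_nonneg (Real.log Rmin), abs_nonneg (Real.log Rmax)]
    · have : Real.log (R (k+1) ω) ≤ |Real.log Rmax| := le_trans hlog2 (le_abs_self _)
      nlinarith [abs_nonneg (Real.log Rmin), abs_nonneg (Real.log Rmax)]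
  filter_upwards [hSLLN] with ω hSω
  set W : ℕ → ℝ := fun k => Real.log (R (k+1) ω) - a (k+1) ω * I k ω with hWdef
  set S : ℕ → ℝ := fun n => ∑ k ∈ Finset.range n, W k with hSdef
  -- basic positivity facts
  have hxpos : ∀ t, 0 < x t ω := by
    intro t
    induction t with
    | zero => exact hx0 ω
    | succ t ih =>
      rw [hx]
      exact mul_pos (mul_pos (lt_of_lt_of_le hRmin (hR t ω).1) ih) (Real.exp_pos _)
  have hynn : ∀ t, 0 ≤ y t ω := by
    intro t
    induction t with
    | zero => exact hy0 ω
    | succ t ih =>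
      rw [hy]
      have hexp : Real.exp (-(a t ω) * y t ω) ≤ 1 := by
        rw [Real.exp_le_one_iff]
        exact mul_nonpos_of_nonpos_of_nonneg (neg_nonpos.mpr (le_trans hamin.le (ha t ω).1)) ih
      have h1 : 0 ≤ x t ω * (1 - Real.exp (-(a t ω) * y t ω)) :=
        mul_nonneg (hxpos t).le (by linarith)
      have h2 : 0 ≤ I t ω := le_trans hImin.le (hI t ω).1
      linarith
  have hyI : ∀ t, I t ω ≤ y (t + 1) ω := by
    intro t
    rw [hy]
    have hexp : Real.exp (-(a t ω) * y t ω) ≤ 1 := by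
      rw [Real.exp_le_one_iff]
      exact mul_nonpos_of_nonpos_of_nonneg (neg_nonpos.mpr (le_trans hamin.le (ha t ω).1))
        (hynn t)
    nlinarith [(hxpos t).le]
  have hlogrec : ∀ t, Real.log (x (t+1) ω)
      = Real.log (R t ω) + Real.log (x t ω) + (-(a t ω) * y t ω) := by
    intro t
    rw [hx, Real.log_mul (mul_pos (lt_of_lt_of_le hRmin (hR t ω).1) (hxpos t)).ne' (Real.exp_ne_zero _),
      Real.log_mul (lt_of_lt_of_le hRmin (hR t ω).1).ne' (hxpos t).ne', Real.log_exp]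
  have hmain : ∀ t, Real.log (x (t+1) ω) ≤ Real.log (x 1 ω) + S t := by
    intro t
    induction t with
    | zero => simp [hSdef]
    | succ t ih =>
      have hstep := hlogrec (t+1)
      have hlogR : Real.log (R (t+1) ω) - a (t+1) ω * y (t+1) ω ≤ W t := by
        rw [hWdef]
        have h1 : a (t+1) ω * I t ω ≤ a (t+1) ω * y (t+1) ω :=
          mul_le_mul_of_nonneg_left (hyI t) (le_trans hamin.le (ha (t+1) ω).1)
        simp only
        linarith
      have hsum : S (t+1) = S t + W t := Finset.sum_range_succ W t
      rw [hsum]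
      have : Real.log (x (t+1+1) ω)
          = Real.log (x (t+1) ω) + (Real.log (R (t+1) ω) - a (t+1) ω * y (t+1) ω) := by
        rw [hstep]; ring
      linarith
  have hWbd : ∀ k, |W k| ≤ C := fun k => hCbd k ω
  -- key: log x t ≤ D + S t for t ≥ 1
  set D : ℝ := Real.log (x 1 ω) + C with hD
  have hkey : ∀ t, 1 ≤ t → Real.log (x t ω) ≤ D + S t := by
    intro t ht
    obtain ⟨s, rfl⟩ : ∃ s, t = s + 1 := ⟨t - 1, by omega⟩
    have h1 := hmain s
    have h2 : S (s+1) = S s + W s := Finset.sum_range_succ W s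
    have h3 := abs_le.mp (hWbd s)
    rw [hD, h2]
    linarith
  -- tendsto of the comparison sequence
  have hcomp : Tendsto (fun t : ℕ => (D + S t) / t) atTop (nhds m) := by
    have h0 : Tendsto (fun t : ℕ => D / t) atTop (nhds 0) :=
      tendsto_const_div_atTop_nhds_zero_nat D
    have := h0.add hSω
    simp only [zero_add] at this
    convert this using 2 with t
    rw [add_div]
  -- x t → 0
  have hlogbot : Tendsto (fun t : ℕ => Real.log (x t ω)) atTop atBot := by
    have hev : ∀ᶠ t : ℕ in atTop, Real.log (x t ω) ≤ D + (m / 2) * t := by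
      have hev1 : ∀ᶠ t : ℕ in atTop, S t / t ≤ m / 2 :=
        hSω.eventually_le_const (by linarith)
      filter_upwards [hev1, eventually_ge_atTop 1] with t h1 h2
      have ht0 : (0:ℝ) < t := by exact_mod_cast Nat.lt_of_lt_of_le Nat.zero_lt_one h2
      have : S t ≤ m / 2 * t := by
        have := mul_le_mul_of_nonneg_right h1 ht0.le
        rwa [div_mul_cancel₀ _ ht0.ne'] at this
      have := hkey t h2
      linarith
    refine tendsto_atBot_mono' atTop hev ?_
    apply tendsto_atBot_add_const_left
    exact Tendsto.const_mul_atTop_of_neg (by linarith) tendsto_natCast_atTop_atTop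
  have hxto0 : Tendsto (fun t => x t ω) atTop (nhds 0) := by
    have := Real.tendsto_exp_atBot.comp hlogbot
    convert this using 2 with t
    exact (Real.exp_log (hxpos t)).symm
  refine ⟨?_, hmneg, hxto0⟩
  -- coboundedness below
  obtain ⟨T0, hT0⟩ := eventually_atTop.mp (hxto0.eventually_lt_const (by norm_num : (0:ℝ) < 1))
  set K : ℝ := amax * (1 + Imax) - Real.log Rmin with hK
  have hybd : ∀ t, T0 + 1 ≤ t → y t ω ≤ 1 + Imax := by
    intro t ht
    obtain ⟨s, rfl⟩ : ∃ s, t = s + 1 := ⟨t - 1, by omega⟩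
    rw [hy]
    have hx1 : x s ω < 1 := hT0 s (by omega)
    have hexp0 : 0 ≤ Real.exp (-(a s ω) * y s ω) := (Real.exp_pos _).le
    have hexp1 : Real.exp (-(a s ω) * y s ω) ≤ 1 := by
      rw [Real.exp_le_one_iff]
      exact mul_nonpos_of_nonpos_of_nonneg (neg_nonpos.mpr (le_trans hamin.le (ha s ω).1))
        (hynn s)
    have hIb := (hI s ω).2
    nlinarith [(hxpos s).le]
  have hstepdown : ∀ t, T0 + 1 ≤ t → Real.log (x t ω) - K ≤ Real.log (x (t+1) ω) := by
    intro t ht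
    rw [hlogrec t, hK]
    have h1 : Real.log Rmin ≤ Real.log (R t ω) := Real.log_le_log hRmin (hR t ω).1
    have h2 : a t ω * y t ω ≤ amax * (1 + Imax) := by
      have hyb := hybd t ht
      have ha2 := (ha t ω).2
      have hamax0 : (0:ℝ) ≤ amax := le_trans hamin.le (le_trans (ha t ω).1 ha2)
      exact mul_le_mul ha2 hyb (hynn t) hamax0
    nlinarith
  have hlinear : ∀ s : ℕ, Real.log (x (T0 + 1) ω) - K * s ≤ Real.log (x (T0 + 1 + s) ω) := by
    intro s
    induction s with
    | zero => simp
    | succ s ih =>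
      have := hstepdown (T0 + 1 + s) (by omega)
      have hcast : ((s + 1 : ℕ) : ℝ) = (s : ℝ) + 1 := by push_cast; ring
      rw [show T0 + 1 + (s + 1) = (T0 + 1 + s) + 1 from by omega, hcast]
      nlinarith
  set L : ℝ := Real.log (x (T0 + 1) ω) with hL
  have hlower : ∀ᶠ t : ℕ in atTop, -|L| - |K| ≤ Real.log (x t ω) / t := by
    filter_upwards [eventually_ge_atTop (T0 + 2)] with t ht
    have ht1 : (1:ℝ) ≤ t := by exact_mod_cast Nat.one_le_iff_ne_zero.mpr (by omega)
    have ht0 : (0:ℝ) < t := by linarith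
    obtain ⟨s, rfl⟩ : ∃ s, t = T0 + 1 + s := ⟨t - (T0 + 1), by omega⟩
    have h1 := hlinear s
    have hsle : (s : ℝ) ≤ (T0 + 1 + s : ℕ) := by push_cast; linarith [(Nat.cast_nonneg T0 : (0:ℝ) ≤ (T0:ℕ))]
    have h2 : L - |K| * (T0 + 1 + s : ℕ) ≤ Real.log (x (T0 + 1 + s) ω) := by
      have hKs : K * s ≤ |K| * (T0 + 1 + s : ℕ) := by
        calc K * s ≤ |K| * s := mul_le_mul_of_nonneg_right (le_abs_self K) (Nat.cast_nonneg s)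
          _ ≤ |K| * (T0 + 1 + s : ℕ) := mul_le_mul_of_nonneg_left hsle (abs_nonneg K)
      linarith
    rw [le_div_iff₀ ht0]
    have hcast : ((T0 + 1 + s : ℕ) : ℝ) = (T0 : ℝ) + 1 + s := by push_cast; ring
    nlinarith [neg_abs_le L, abs_nonneg L, abs_nonneg K, (Nat.cast_nonneg s : (0:ℝ) ≤ (s:ℕ)),
      (Nat.cast_nonneg T0 : (0:ℝ) ≤ (T0:ℕ))]
  have hub : ∀ᶠ t : ℕ in atTop, Real.log (x t ω) / t ≤ (D + S t) / t := by
    filter_upwards [eventually_ge_atTop 1] with t ht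
    have ht0 : (0:ℝ) < t := by exact_mod_cast Nat.lt_of_lt_of_le Nat.zero_lt_one ht
    exact (div_le_div_iff_of_pos_right ht0).mpr (hkey t ht)
  calc limsup (fun t : ℕ => Real.log (x t ω) / t) atTop
      ≤ limsup (fun t : ℕ => (D + S t) / t) atTop :=
        limsup_le_limsup hub (isCoboundedUnder_le_of_eventually_le atTop hlower)
          hcomp.isBoundedUnder_le
    _ = m := hcomp.limsup_eq
end

section
/- Let μ be an ergodic invariant probability measure for a Markov chain of the form u(t+1) = u(t)·f(u(t), v(t), ξ(t)), v(t+1) = G(u(t), v(t), ξ(t)) on a compact set S, with sup |log f| < ∞, such that μ({(u,v) : u > 0}) = 1. Then ∫_S E[log f(z, ξ)] μ(dz) = 0. -/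
open MeasureTheory ProbabilityTheory

open Filter

lemma key_real (a b C M : ℝ) (hb : |b| ≤ C) :
    |max (a + b) (-M) - max a (-M) - b| ≤ 2 * C := by
  have h1 : |max (a + b) (-M) - max a (-M)| ≤ |a + b - a| := abs_max_sub_max_le_abs _ _ _
  have h2 : |a + b - a| = |b| := by ring_nf
  have h3 : |max (a + b) (-M) - max a (-M) - b| ≤ |max (a+b) (-M) - max a (-M)| + |b| :=
    abs_sub _ _
  nlinarith [abs_nonneg b]

lemma key_real_zero (a b C M : ℝ) (hb : |b| ≤ C) (ha : C - M ≤ a) :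
    max (a + b) (-M) - max a (-M) - b = 0 := by
  have hC : 0 ≤ C := (abs_nonneg b).trans hb
  have h1 : max a (-M) = a := max_eq_left (by linarith)
  have h2 : max (a + b) (-M) = a + b := max_eq_left (by
    have := (abs_le.mp hb).1; linarith)
  rw [h1, h2]; ring

lemma measurable_map_kernel {α β γ : Type*} [MeasurableSpace α] [MeasurableSpace β]
    [MeasurableSpace γ] (ν : Measure β) [SFinite ν] (T : α → β → γ)
    (hT : Measurable (Function.uncurry T)) :
    Measurable (fun a => ν.map (T a)) := by
  apply Measure.measurable_of_measurable_coe
  intro s hs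
  have hTa : ∀ a, Measurable (T a) := fun a => hT.comp measurable_prodMk_left
  have h : ∀ a, ν.map (T a) s = ν (Prod.mk a ⁻¹' (Function.uncurry T ⁻¹' s)) := by
    intro a; rw [Measure.map_apply (hTa a) hs]; rfl
  simp_rw [h]
  exact measurable_measure_prodMk_left (hT hs)

lemma integral_bind_bdd {α β : Type*} [MeasurableSpace α] [MeasurableSpace β]
    (μ : Measure α) [IsProbabilityMeasure μ] (κ : α → Measure β) (hκ : Measurable κ)
    [hbp : IsProbabilityMeasure (μ.bind κ)]
    (hκp : ∀ a, IsProbabilityMeasure (κ a))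
    (g : β → ℝ) (hg : Measurable g) (B : ℝ) (hB0 : 0 ≤ B) (hB : ∀ x, |g x| ≤ B) :
    ∫ x, g x ∂(μ.bind κ) = ∫ a, ∫ x, g x ∂(κ a) ∂μ := by
  have hmeas : Measurable fun x => ENNReal.ofReal (g x + B) :=
    (hg.add measurable_const).ennreal_ofReal
  have hgm : ∀ (ρ : Measure β), IsProbabilityMeasure ρ →
      ∫ x, g x ∂ρ = (∫⁻ x, ENNReal.ofReal (g x + B) ∂ρ).toReal - B := by
    intro ρ hρ
    have hint : Integrable g ρ := (integrable_const B).mono' hg.aestronglyMeasurable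
      (ae_of_all _ fun x => by simpa using hB x)
    have h1 : ∫ x, (g x + B) ∂ρ = (∫⁻ x, ENNReal.ofReal (g x + B) ∂ρ).toReal :=
      integral_eq_lintegral_of_nonneg_ae
        (ae_of_all _ fun x => by have := (abs_le.mp (hB x)).1; simp only [Pi.zero_apply]; linarith)
        (hg.add measurable_const).aestronglyMeasurable
    have h2 : ∫ x, (g x + B) ∂ρ = ∫ x, g x ∂ρ + B := by
      rw [integral_add hint (integrable_const B), integral_const]
      simp
    linarith
  have hL : Measurable fun a => ∫⁻ x, ENNReal.ofReal (g x + B) ∂(κ a) :=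
    (Measure.measurable_lintegral hmeas).comp hκ
  have hLle : ∀ a, (∫⁻ x, ENNReal.ofReal (g x + B) ∂(κ a)) ≤ ENNReal.ofReal (2 * B) := by
    intro a
    calc ∫⁻ x, ENNReal.ofReal (g x + B) ∂(κ a)
        ≤ ∫⁻ _, ENNReal.ofReal (2 * B) ∂(κ a) := by
          refine lintegral_mono fun x => ENNReal.ofReal_le_ofReal ?_
          have := (abs_le.mp (hB x)).2; linarith
      _ = ENNReal.ofReal (2 * B) := by
          have := hκp a; simp
  have hLlt : ∀ a, (∫⁻ x, ENNReal.ofReal (g x + B) ∂(κ a)) < ⊤ :=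
    fun a => lt_of_le_of_lt (hLle a) ENNReal.ofReal_lt_top
  calc ∫ x, g x ∂(μ.bind κ)
      = (∫⁻ x, ENNReal.ofReal (g x + B) ∂(μ.bind κ)).toReal - B := hgm _ hbp
    _ = (∫⁻ a, ∫⁻ x, ENNReal.ofReal (g x + B) ∂(κ a) ∂μ).toReal - B := by
        rw [Measure.lintegral_bind hκ.aemeasurable hmeas.aemeasurable]
    _ = (∫ a, (∫⁻ x, ENNReal.ofReal (g x + B) ∂(κ a)).toReal ∂μ) - B := by
        rw [integral_toReal hL.aemeasurable (ae_of_all _ hLlt)]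
    _ = ∫ a, ∫ x, g x ∂(κ a) ∂μ := by
        have hintL : Integrable (fun a => (∫⁻ x, ENNReal.ofReal (g x + B) ∂(κ a)).toReal) μ := by
          refine (integrable_const (2 * B)).mono' hL.ennreal_toReal.aestronglyMeasurable
            (ae_of_all _ fun a => ?_)
          rw [Real.norm_eq_abs, abs_of_nonneg ENNReal.toReal_nonneg]
          calc (∫⁻ x, ENNReal.ofReal (g x + B) ∂(κ a)).toReal
              ≤ (ENNReal.ofReal (2 * B)).toReal :=
                ENNReal.toReal_mono ENNReal.ofReal_ne_top (hLle a)
            _ = 2 * B := ENNReal.toReal_ofReal (by linarith)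
        rw [show (fun a => ∫ x, g x ∂(κ a)) = fun a =>
            (∫⁻ x, ENNReal.ofReal (g x + B) ∂(κ a)).toReal - B from
          funext fun a => hgm (κ a) (hκp a)]
        rw [integral_sub hintL (integrable_const B), integral_const]
        simp

/-- Proposition 2 (one species): for an ergodic invariant probability measure `μ`
of the Markov chain `u' = u·f(u,v,ξ)`, `v' = G(u,v,ξ)` on a compact forward
invariant set `S ⊆ [0,∞) × ℝᵐ`, with `sup |log f| < ∞` and `μ({u > 0}) = 1`,
the realized per-capita growth rate `∫ E[log f(z, ξ)] μ(dz)` equals `0`. -/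
theorem realized_growth_rate_zero
    {Ξ : Type*} [MeasurableSpace Ξ] (ν : Measure Ξ) [IsProbabilityMeasure ν]
    (m : ℕ)
    (f : ℝ × (Fin m → ℝ) → Ξ → ℝ) (G : ℝ × (Fin m → ℝ) → Ξ → Fin m → ℝ)
    (hfcont : ∀ ξ, Continuous (fun z => f z ξ))
    (hfmeas : Measurable (Function.uncurry f))
    (hGcont : ∀ ξ, Continuous (fun z => G z ξ))
    (hGmeas : Measurable (Function.uncurry G))
    (hfpos : ∀ z ξ, 0 < f z ξ)
    (C : ℝ) (hfbdd : ∀ z ξ, |Real.log (f z ξ)| ≤ C)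
    (S : Set (ℝ × (Fin m → ℝ))) (hScompact : IsCompact S)
    (hSsub : ∀ z ∈ S, 0 ≤ z.1)
    (hSinv : ∀ z ∈ S, ∀ ξ, (z.1 * f z ξ, G z ξ) ∈ S)
    (μ : Measure (ℝ × (Fin m → ℝ))) [IsProbabilityMeasure μ]
    (hinv : μ.bind (fun z => ν.map (fun ξ => (z.1 * f z ξ, G z ξ))) = μ)
    (hergodic : ∀ A : Set (ℝ × (Fin m → ℝ)), MeasurableSet A →
      (∀ᵐ z ∂μ, z ∈ A → ∀ᵐ ξ ∂ν, (z.1 * f z ξ, G z ξ) ∈ A) →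
      μ A = 0 ∨ μ A = 1)
    (hμS : μ S = 1)
    (hpos : μ {z | 0 < z.1} = 1) :
    ∫ z, (∫ ξ, Real.log (f z ξ) ∂ν) ∂μ = 0 := by
  classical
  -- basic setup
  set T : (ℝ × (Fin m → ℝ)) → Ξ → ℝ × (Fin m → ℝ) := fun z ξ => (z.1 * f z ξ, G z ξ) with hTdef
  have hTmeas : Measurable (Function.uncurry T) :=
    ((measurable_fst.fst).mul hfmeas).prodMk hGmeas
  have hTz : ∀ z, Measurable (T z) := fun z => hTmeas.comp measurable_prodMk_left
  have hΞ : Nonempty Ξ := by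
    by_contra h
    rw [not_nonempty_iff] at h
    have h1 : (Set.univ : Set Ξ) = ∅ := Set.univ_eq_empty_iff.mpr h
    have h2 : ν Set.univ = 1 := measure_univ
    rw [h1, measure_empty] at h2
    exact zero_ne_one h2
  obtain ⟨ξ₀⟩ := hΞ
  have hC0 : 0 ≤ C := (abs_nonneg _).trans (hfbdd (0, fun _ => 0) ξ₀)
  -- upper bound for log u on S
  obtain ⟨B, hB⟩ : BddAbove (Prod.fst '' S) := (hScompact.image continuous_fst).bddAbove
  set K : ℝ := Real.log (max B 1) with hKdef
  have hK0 : 0 ≤ K := Real.log_nonneg (le_max_right _ _)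
  have hK : ∀ z ∈ S, 0 < z.1 → Real.log z.1 ≤ K := by
    intro z hz hz1
    exact Real.log_le_log hz1 (le_trans (hB ⟨z, hz, rfl⟩) (le_max_left _ _))
  have hSm : MeasurableSet S := hScompact.isClosed.measurableSet
  -- a.e. facts
  have haeS : ∀ᵐ z ∂μ, z ∈ S := by
    have h := (prob_compl_eq_zero_iff hSm).mpr hμS
    rw [ae_iff]
    simpa [Set.compl_def] using h
  have haeP : ∀ᵐ z ∂μ, 0 < z.1 := by
    have hm : MeasurableSet {z : ℝ × (Fin m → ℝ) | 0 < z.1} :=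
      measurableSet_lt measurable_const measurable_fst
    have h := (prob_compl_eq_zero_iff hm).mpr hpos
    rw [ae_iff]
    simpa [Set.compl_def] using h
  have hae : ∀ᵐ z ∂μ, z ∈ S ∧ 0 < z.1 := haeS.and haeP
  -- kernel
  set κ : (ℝ × (Fin m → ℝ)) → Measure (ℝ × (Fin m → ℝ)) := fun z => ν.map (T z) with hκdef
  have hκ : Measurable κ := measurable_map_kernel ν T hTmeas
  have hκp : ∀ z, IsProbabilityMeasure (κ z) :=
    fun z => Measure.isProbabilityMeasure_map (hTz z).aemeasurable
  have hbindeq : μ.bind κ = μ := hinv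
  have hbp : IsProbabilityMeasure (μ.bind κ) := by rw [hbindeq]; infer_instance
  -- the sets A M
  set A : ℕ → Set (ℝ × (Fin m → ℝ)) := fun M => {z | Real.log z.1 < C - M} with hAdef
  have hAm : ∀ M, MeasurableSet (A M) :=
    fun M => measurableSet_lt (Real.measurable_log.comp measurable_fst) measurable_const
  -- the key bound for each M
  have hbound : ∀ M : ℕ, |∫ z, (∫ ξ, Real.log (f z ξ) ∂ν) ∂μ| ≤ 2 * C * (μ (A M)).toReal := by
    intro M
    set φ : (ℝ × (Fin m → ℝ)) → ℝ := fun z => max (min (Real.log z.1) K) (-(M : ℝ)) with hφdef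
    have hφmeas : Measurable φ :=
      ((Real.measurable_log.comp measurable_fst).min measurable_const).max measurable_const
    have hφbdd : ∀ z, |φ z| ≤ K + M := by
      intro z
      have hM0 : (0:ℝ) ≤ M := Nat.cast_nonneg M
      simp only [hφdef]
      rw [abs_le]
      constructor
      · exact le_trans (by linarith) (le_max_right (min (Real.log z.1) K) (-(M : ℝ)))
      · exact max_le (le_trans (min_le_right _ _) (by linarith)) (by linarith)
    -- Step A: invariance
    have stepA : ∫ z, φ z ∂μ = ∫ z, ∫ ξ, φ (T z ξ) ∂ν ∂μ := by
      conv_lhs => rw [← hbindeq]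
      rw [integral_bind_bdd μ κ hκ hκp φ hφmeas (K + M)
        (by positivity) hφbdd]
      refine integral_congr_ae (ae_of_all _ fun z => ?_)
      exact integral_map (hTz z).aemeasurable hφmeas.aestronglyMeasurable
    -- integrable pieces
    have hint2 : Integrable φ μ := (integrable_const (K + M)).mono'
      hφmeas.aestronglyMeasurable (ae_of_all _ fun z => by simpa using hφbdd z)
    have hφT : Measurable (fun p : (ℝ × (Fin m → ℝ)) × Ξ => φ (T p.1 p.2)) :=
      hφmeas.comp hTmeas
    have hint1 : Integrable (fun z => ∫ ξ, φ (T z ξ) ∂ν) μ := by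
      refine (integrable_const (K + M)).mono'
        hφT.stronglyMeasurable.integral_prod_right'.aestronglyMeasurable
        (ae_of_all _ fun z => ?_)
      exact (norm_integral_le_of_norm_le_const (ae_of_all _ fun ξ => by
        simpa using hφbdd (T z ξ))).trans (by simp)
    have hlogf : Measurable (fun p : (ℝ × (Fin m → ℝ)) × Ξ => Real.log (f p.1 p.2)) :=
      Real.measurable_log.comp hfmeas
    have hint3 : Integrable (fun z => ∫ ξ, Real.log (f z ξ) ∂ν) μ := by
      refine (integrable_const C).mono'
        hlogf.stronglyMeasurable.integral_prod_right'.aestronglyMeasurable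
        (ae_of_all _ fun z => ?_)
      exact (norm_integral_le_of_norm_le_const (ae_of_all _ fun ξ => by
        simpa using hfbdd z ξ)).trans (by simp)
    -- D
    set D : (ℝ × (Fin m → ℝ)) → ℝ :=
      fun z => (∫ ξ, φ (T z ξ) ∂ν) - φ z - ∫ ξ, Real.log (f z ξ) ∂ν with hDdef
    have hI12 : Integrable (fun z => (∫ ξ, φ (T z ξ) ∂ν) - φ z) μ := hint1.sub hint2
    have hDint : Integrable D μ := hI12.sub hint3
    have hDval : ∫ z, D z ∂μ = - ∫ z, (∫ ξ, Real.log (f z ξ) ∂ν) ∂μ := by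
      simp only [hDdef]
      rw [integral_sub hI12 hint3, integral_sub hint1 hint2, ← stepA]
      ring
    -- pointwise a.e. bound on D
    have hDbd : ∀ᵐ z ∂μ, |D z| ≤ (A M).indicator (fun _ => 2 * C) z := by
      filter_upwards [hae] with z hz
      obtain ⟨hzS, hzu⟩ := hz
      -- rewrite φ values
      have hφz : φ z = max (Real.log z.1) (-(M : ℝ)) := by
        simp only [hφdef, min_eq_left (hK z hzS hzu)]
      have hφT' : ∀ ξ, φ (T z ξ) = max (Real.log z.1 + Real.log (f z ξ)) (-(M : ℝ)) := by
        intro ξ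
        have hu' : 0 < z.1 * f z ξ := mul_pos hzu (hfpos z ξ)
        have hTS : T z ξ ∈ S := hSinv z hzS ξ
        have hlog : Real.log ((T z ξ).1) = Real.log z.1 + Real.log (f z ξ) :=
          Real.log_mul (ne_of_gt hzu) (ne_of_gt (hfpos z ξ))
        have hle : Real.log ((T z ξ).1) ≤ K := hK _ hTS hu'
        simp only [hφdef]
        rw [show (T z ξ).1 = z.1 * f z ξ from rfl] at hlog hle
        rw [hlog] at hle ⊢
        rw [min_eq_left hle]
      -- E
      have hEi1 : Integrable (fun ξ => φ (T z ξ)) ν := (integrable_const (K + M)).mono'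
        (hφmeas.comp (hTz z)).aestronglyMeasurable
        (ae_of_all _ fun ξ => by simpa using hφbdd (T z ξ))
      have hEi3 : Integrable (fun ξ => Real.log (f z ξ)) ν := (integrable_const C).mono'
        ((Real.measurable_log.comp (hfmeas.comp measurable_prodMk_left))).aestronglyMeasurable
        (ae_of_all _ fun ξ => le_trans (le_of_eq (Real.norm_eq_abs _)) (hfbdd z ξ))
      have hIa : Integrable (fun ξ => φ (T z ξ) - φ z) ν := hEi1.sub (integrable_const (φ z))
      have hDeq : D z = ∫ ξ, (φ (T z ξ) - φ z - Real.log (f z ξ)) ∂ν := by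
        rw [integral_sub hIa hEi3,
          integral_sub hEi1 (integrable_const (φ z)), integral_const]
        simp [hDdef]
      by_cases hzA : z ∈ A M
      · rw [Set.indicator_of_mem hzA, hDeq]
        have hb : ∀ ξ, ‖φ (T z ξ) - φ z - Real.log (f z ξ)‖ ≤ 2 * C := by
          intro ξ
          rw [hφz, hφT' ξ, Real.norm_eq_abs]
          exact key_real _ _ C _ (hfbdd z ξ)
        have hnb := norm_integral_le_of_norm_le_const (μ := ν) (ae_of_all _ hb)
        simpa using hnb
      · rw [Set.indicator_of_notMem hzA, hDeq]
        have hge : C - (M : ℝ) ≤ Real.log z.1 := not_lt.mp hzA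
        have : ∀ ξ, φ (T z ξ) - φ z - Real.log (f z ξ) = 0 := by
          intro ξ
          rw [hφz, hφT' ξ]
          exact key_real_zero _ _ C _ (hfbdd z ξ) hge
        simp [this]
    -- integrate the bound
    have hIndInt : Integrable ((A M).indicator (fun _ => 2 * C)) μ :=
      (integrable_const (2 * C)).indicator (hAm M)
    have : |∫ z, D z ∂μ| ≤ 2 * C * (μ (A M)).toReal := by
      calc |∫ z, D z ∂μ| ≤ ∫ z, |D z| ∂μ := by
            simpa [Real.norm_eq_abs] using norm_integral_le_integral_norm (μ := μ) D
        _ ≤ ∫ z, (A M).indicator (fun _ => 2 * C) z ∂μ :=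
            integral_mono_ae hDint.abs hIndInt hDbd
        _ = 2 * C * (μ (A M)).toReal := by
            rw [integral_indicator_const _ (hAm M)]
            simp [mul_comm, measureReal_def]
    rw [hDval, abs_neg] at this
    exact this
  -- the measures μ (A M) tend to 0
  have hAmono : Antitone A := by
    intro M N hMN z hz
    simp only [hAdef, Set.mem_setOf_eq] at hz ⊢
    have : (M : ℝ) ≤ N := Nat.cast_le.mpr hMN
    linarith
  have hAiInter : ⋂ M, A M = ∅ := by
    ext z
    simp only [Set.mem_iInter, Set.mem_empty_iff_false, iff_false, not_forall, hAdef,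
      Set.mem_setOf_eq, not_lt]
    obtain ⟨M, hM⟩ := exists_nat_gt (C - Real.log z.1)
    exact ⟨M, by linarith⟩
  have hT1 : Tendsto (fun M => μ (A M)) atTop (nhds 0) := by
    have := tendsto_measure_iInter_atTop (μ := μ)
      (fun M => (hAm M).nullMeasurableSet) hAmono ⟨0, measure_ne_top μ _⟩
    rw [hAiInter] at this
    simpa [Function.comp_def] using this
  have hT2 : Tendsto (fun M => 2 * C * (μ (A M)).toReal) atTop (nhds 0) := by
    have h := (ENNReal.tendsto_toReal (by simp)).comp hT1
    simpa using h.const_mul (2 * C)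
  have habs : |∫ z, (∫ ξ, Real.log (f z ξ) ∂ν) ∂μ| ≤ 0 :=
    ge_of_tendsto' hT2 hbound
  exact abs_nonpos_iff.mp habs
end

section
/- Let μ be an ergodic invariant probability measure for the k-host Holt–Lawton chain supported on the set where x_1 = 0 and x_i > 0 for some fixed i ≥ 2 (and with r_i(μ) = 0 from Proposition 2). Then ∫ y μ(dx, dy) = E[ln R_i]/E[a_i], and consequently the external Lyapunov exponent of host 1 equals r_1(μ) = E[ln R_1] - E[a_1]·(E[ln R_i]/E[a_i]) = E[a_1]·(P_1* - P_i*). -/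
open MeasureTheory ProbabilityTheory

/-- Key computation in Theorems 1 and 2: for an ergodic invariant measure `μ`
of the k-host Holt–Lawton chain supported on `{x₁ = 0, xᵢ > 0}` with
`rᵢ(μ) = 0` (Proposition 2), the average parasitoid density is
`∫ y μ = E[ln Rᵢ]/E[aᵢ]`, and hence the external Lyapunov exponent of host 1 is
`r₁(μ) = E[ln R₁] - E[a₁]·(E[ln Rᵢ]/E[aᵢ]) = E[a₁]·(P₁* - Pᵢ*)`. -/
theorem external_lyapunov_host_one
    {Ω : Type*} [MeasurableSpace Ω] (P : Measure Ω) [IsProbabilityMeasure P]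
    (k : ℕ) [NeZero k]
    (R a : Fin k → Ω → ℝ) (I : Ω → ℝ)
    (hmeasR : ∀ j, Measurable (R j)) (hmeasa : ∀ j, Measurable (a j))
    (hmeasI : Measurable I)
    (Rmin Rmax amin amax Imin Imax : ℝ)
    (hRmin : 0 < Rmin) (hamin : 0 < amin) (hImin : 0 < Imin)
    (hR : ∀ j ω, R j ω ∈ Set.Icc Rmin Rmax)
    (ha : ∀ j ω, a j ω ∈ Set.Icc amin amax)
    (hI : ∀ ω, I ω ∈ Set.Icc Imin Imax)
    (μ : Measure ((Fin k → ℝ) × ℝ)) [IsProbabilityMeasure μ]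
    (i : Fin k) (hi : i ≠ 0)
    (hsupp : μ {z | z.1 0 = 0 ∧ 0 < z.1 i} = 1)
    (hybdd : ∃ Y : ℝ, μ {z | z.2 ∈ Set.Icc 0 Y} = 1)
    (hri : ∫ z, (∫ ω, (Real.log (R i ω) - a i ω * z.2) ∂P) ∂μ = 0) :
    (∫ z, z.2 ∂μ = (∫ ω, Real.log (R i ω) ∂P) / ∫ ω, a i ω ∂P) ∧
    (∫ z, (∫ ω, (Real.log (R 0 ω) - a 0 ω * z.2) ∂P) ∂μ =
      (∫ ω, Real.log (R 0 ω) ∂P) -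
        (∫ ω, a 0 ω ∂P) * ((∫ ω, Real.log (R i ω) ∂P) / ∫ ω, a i ω ∂P)) ∧
    (∫ z, (∫ ω, (Real.log (R 0 ω) - a 0 ω * z.2) ∂P) ∂μ =
      (∫ ω, a 0 ω ∂P) *
        ((∫ ω, Real.log (R 0 ω) ∂P) / (∫ ω, a 0 ω ∂P) -
          (∫ ω, Real.log (R i ω) ∂P) / ∫ ω, a i ω ∂P)) := by
  -- integrability of log R j and a j
  have intlog : ∀ j, Integrable (fun ω => Real.log (R j ω)) P := by
    intro j
    refine ⟨((hmeasR j).log).aestronglyMeasurable, ?_⟩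
    apply HasFiniteIntegral.of_bounded (C := max |Real.log Rmin| |Real.log Rmax|)
    filter_upwards with ω
    have h1 := (hR j ω).1
    have h2 := (hR j ω).2
    have hpos : 0 < R j ω := lt_of_lt_of_le hRmin h1
    rw [Real.norm_eq_abs, abs_le]
    constructor
    · have := Real.log_le_log_iff hRmin hpos |>.2 h1
      have h3 : Real.log Rmin ≤ Real.log (R j ω) := Real.log_le_log hRmin h1
      have : -(max |Real.log Rmin| |Real.log Rmax|) ≤ Real.log Rmin := by
        have := neg_abs_le (Real.log Rmin)
        have h4 : |Real.log Rmin| ≤ max |Real.log Rmin| |Real.log Rmax| := le_max_left _ _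
        linarith
      linarith
    · have h3 : Real.log (R j ω) ≤ Real.log Rmax := Real.log_le_log hpos h2
      have : Real.log Rmax ≤ max |Real.log Rmin| |Real.log Rmax| :=
        le_trans (le_abs_self _) (le_max_right _ _)
      linarith
  have inta : ∀ j, Integrable (a j) P := by
    intro j
    refine ⟨(hmeasa j).aestronglyMeasurable, ?_⟩
    apply HasFiniteIntegral.of_bounded (C := max |amin| |amax|)
    filter_upwards with ω
    rw [Real.norm_eq_abs, abs_le]
    constructor
    · have := (ha j ω).1
      have h4 : -(max |amin| |amax|) ≤ amin := by
        have := neg_abs_le amin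
        have : |amin| ≤ max |amin| |amax| := le_max_left _ _
        linarith [neg_abs_le amin]
      linarith
    · have := (ha j ω).2
      have : amax ≤ max |amin| |amax| := le_trans (le_abs_self _) (le_max_right _ _)
      linarith
  -- inner integral computation
  have inner : ∀ j y, (∫ ω, (Real.log (R j ω) - a j ω * y) ∂P)
      = (∫ ω, Real.log (R j ω) ∂P) - (∫ ω, a j ω ∂P) * y := by
    intro j y
    rw [integral_sub (intlog j) ((inta j).mul_const y), integral_mul_const]
  -- integrability of y under μ
  obtain ⟨Y, hY⟩ := hybdd
  have hYmeas : MeasurableSet {z : (Fin k → ℝ) × ℝ | z.2 ∈ Set.Icc 0 Y} :=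
    measurable_snd measurableSet_Icc
  have haey : ∀ᵐ z ∂μ, z.2 ∈ Set.Icc 0 Y := by
    rw [ae_iff]
    have := measure_compl hYmeas (measure_ne_top μ _)
    simp only [measure_univ, hY] at this
    simpa [Set.compl_setOf] using this.trans (by simp)
  have inty : Integrable (fun z : (Fin k → ℝ) × ℝ => z.2) μ := by
    refine ⟨measurable_snd.aestronglyMeasurable, ?_⟩
    apply HasFiniteIntegral.of_bounded (C := |Y|)
    filter_upwards [haey] with z hz
    rw [Real.norm_eq_abs, abs_le]
    constructor
    · have := hz.1; have := neg_abs_le Y; have : (0:ℝ) ≤ |Y| := abs_nonneg Y; linarith [hz.1]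
    · exact le_trans hz.2 (le_abs_self Y)
  -- outer integral computation
  have outer : ∀ j, (∫ z, (∫ ω, (Real.log (R j ω) - a j ω * z.2) ∂P) ∂μ)
      = (∫ ω, Real.log (R j ω) ∂P) - (∫ ω, a j ω ∂P) * ∫ z, z.2 ∂μ := by
    intro j
    simp_rw [inner j]
    rw [integral_sub (integrable_const _) (inty.const_mul _), integral_const,
      integral_const_mul]
    simp
  -- positivity of E[a i], E[a 0]
  have hA : ∀ j, 0 < ∫ ω, a j ω ∂P := by
    intro j
    have : amin ≤ ∫ ω, a j ω ∂P := by
      have := integral_mono (integrable_const amin) (inta j) (fun ω => (ha j ω).1)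
      simpa using this
    linarith
  have hAi := (hA i).ne'
  have hA0 := (hA 0).ne'
  rw [outer i] at hri
  have hy : ∫ z, z.2 ∂μ = (∫ ω, Real.log (R i ω) ∂P) / ∫ ω, a i ω ∂P := by
    field_simp
    linarith
  refine ⟨hy, ?_, ?_⟩
  · rw [outer 0, hy]
  · rw [outer 0, hy]
    field_simp
end
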